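/- General coordinate system theorem: let N be a finite set and σ an antichain of subsets of N with sp(σ) = N. For each family (κ_S)_{S∈σ} with κ_S an antichain of span S (i.e., sp(κ_S) = S), form the interval [⋁_{S∈σ} κ_S, ⨉_{S∈σ} κ_S]. The nonempty intervals among these are pairwise disjoint and their union is the set Υ_N of all antichains of subsets of N with span exactly N. -/

import Mathlib

open Finset

/-- Families of finite subsets of ℕ. -/
abbrev Fam := Finset (Finset ℕ)

/-- `α` is an antichain of subsets of `N`: all members are subsets of `N`
and no member is a (proper) subset of another. -/
def IsAC (N : Finset ℕ) (α : Fam) : Prop :=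
  (∀ A ∈ α, A ⊆ N) ∧ ∀ A ∈ α, ∀ B ∈ α, A ⊆ B → A = B

instance (N : Finset ℕ) : DecidablePred (IsAC N) := fun α => by
  unfold IsAC; infer_instance

/-- The partial order on antichains: every member of `α` is contained in some member of `β`. -/
def amle (α β : Fam) : Prop := ∀ A ∈ α, ∃ B ∈ β, A ⊆ B

instance (α β : Fam) : Decidable (amle α β) := by
  unfold amle; infer_instance

/-- `sup` of a family: its maximal elements under inclusion. -/
def maxels (S : Fam) : Fam := S.filter (fun A => ∀ B ∈ S, A ⊆ B → A = B)

/-- The span of an antichain: the union of its members. -/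
def sp (α : Fam) : Finset ℕ := α.sup id

/-- Join: maximal elements of the union. -/
def joinAC (α β : Fam) : Fam := maxels (α ∪ β)

/-- Meet: maximal elements of the pairwise intersections. -/
def meetAC (α β : Fam) : Fam := maxels ((α ×ˢ β).image fun p => p.1 ∩ p.2)

/-- Projection onto `M`: maximal elements of {A ∩ M : A ∈ α}. -/
def proj (M : Finset ℕ) (α : Fam) : Fam := maxels (α.image (· ∩ M))

/-- External product. -/
def xprod (α β : Fam) : Fam :=
  maxels ((α ×ˢ β).image fun p => (p.1 \ sp β) ∪ (p.2 \ sp α) ∪ (p.1 ∩ p.2))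

/-- The finite set of all antichains of subsets of `N`. -/
def AMTf (N : Finset ℕ) : Finset Fam := N.powerset.powerset.filter (IsAC N)

/-- The interval `[a, b]` inside `AMTf N`, as a `Finset`. -/
def intervalF (N : Finset ℕ) (a b : Fam) : Finset Fam :=
  (AMTf N).filter (fun κ => amle a κ ∧ amle κ b)

/-- The interval `[a, b]` of antichains of subsets of `N`, as a `Set`. -/
def intervalSet (N : Finset ℕ) (a b : Fam) : Set Fam :=
  {κ | IsAC N κ ∧ amle a κ ∧ amle κ b}

/-- n-ary join of a family indexed by the members of `σ`. -/
def bigJoin (σ : Fam) (κ : Finset ℕ → Fam) : Fam := maxels (σ.sup κ)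

/-- n-ary external product of a family indexed by the members of `σ`. -/
noncomputable def bigX (σ : Fam) (κ : Finset ℕ → Fam) : Fam :=
  (σ.toList.map κ).foldr xprod {(∅ : Finset ℕ)}

/-- Nonempty antichains of subsets of `S` with span exactly `S`. -/
def Upsf (S : Finset ℕ) : Finset Fam :=
  S.powerset.powerset.filter (fun κ => IsAC S κ ∧ κ ≠ ∅ ∧ sp κ = S)

/-! ### Auxiliary lemmas -/

lemma mem_sp {α : Fam} {x : ℕ} : x ∈ sp α ↔ ∃ A ∈ α, x ∈ A := by
  simp [sp, Finset.mem_sup]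

lemma mem_maxels {S : Fam} {A : Finset ℕ} :
    A ∈ maxels S ↔ A ∈ S ∧ ∀ B ∈ S, A ⊆ B → A = B := by
  simp [maxels]

lemma maxels_subset {S : Fam} : maxels S ⊆ S := Finset.filter_subset _ _

lemma exists_le_maxels {S : Fam} {A : Finset ℕ} (h : A ∈ S) :
    ∃ B ∈ maxels S, A ⊆ B := by
  classical
  obtain ⟨m, hm, hmax⟩ := (S.filter (fun B => A ⊆ B)).exists_maximal
    ⟨A, by simp [h]⟩
  rw [Finset.mem_filter] at hm
  refine ⟨m, mem_maxels.2 ⟨hm.1, fun B hB hmB => ?_⟩, hm.2⟩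
  by_contra hne
  exact hne (le_antisymm hmB (hmax (Finset.mem_filter.2 ⟨hB, hm.2.trans hmB⟩) hmB))

lemma sp_maxels (S : Fam) : sp (maxels S) = sp S := by
  apply Finset.Subset.antisymm
  · exact fun x hx => by
      obtain ⟨A, hA, hxA⟩ := mem_sp.1 hx
      exact mem_sp.2 ⟨A, maxels_subset hA, hxA⟩
  · intro x hx
    obtain ⟨A, hA, hxA⟩ := mem_sp.1 hx
    obtain ⟨B, hB, hAB⟩ := exists_le_maxels hA
    exact mem_sp.2 ⟨B, hB, hAB hxA⟩

lemma sp_subset_of_amle {α β : Fam} (h : amle α β) : sp α ⊆ sp β := by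
  intro x hx
  obtain ⟨A, hA, hxA⟩ := mem_sp.1 hx
  obtain ⟨B, hB, hAB⟩ := h A hA
  exact mem_sp.2 ⟨B, hB, hAB hxA⟩

/-- Antichain antisymmetry for `amle`. -/
lemma amle_antisymm {α β : Fam}
    (hα : ∀ A ∈ α, ∀ B ∈ α, A ⊆ B → A = B)
    (hβ : ∀ A ∈ β, ∀ B ∈ β, A ⊆ B → A = B)
    (h1 : amle α β) (h2 : amle β α) : α = β := by
  ext A
  constructor
  · intro hA
    obtain ⟨B, hB, hAB⟩ := h1 A hA
    obtain ⟨A', hA', hBA'⟩ := h2 B hB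
    have : A = A' := hα A hA A' hA' (hAB.trans hBA')
    subst this
    have : A = B := Finset.Subset.antisymm hAB hBA'
    exact this ▸ hB
  · intro hA
    obtain ⟨B, hB, hAB⟩ := h2 A hA
    obtain ⟨A', hA', hBA'⟩ := h1 B hB
    have : A = A' := hβ A hA A' hA' (hAB.trans hBA')
    subst this
    have : A = B := Finset.Subset.antisymm hAB hBA'
    exact this ▸ hB

lemma mem_xprod_src {α β : Fam} {X : Finset ℕ} (h : X ∈ xprod α β) :
    ∃ a ∈ α, ∃ b ∈ β, X = (a \ sp β) ∪ (b \ sp α) ∪ (a ∩ b) := by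
  have := maxels_subset h
  simp only [Finset.mem_image, Finset.mem_product] at this
  obtain ⟨⟨a, b⟩, ⟨ha, hb⟩, hX⟩ := this
  exact ⟨a, ha, b, hb, hX.symm⟩

lemma src_le_xprod {α β : Fam} {a b : Finset ℕ} (ha : a ∈ α) (hb : b ∈ β) :
    ∃ X ∈ xprod α β, (a \ sp β) ∪ (b \ sp α) ∪ (a ∩ b) ⊆ X := by
  apply exists_le_maxels
  exact Finset.mem_image.2 ⟨(a, b), Finset.mem_product.2 ⟨ha, hb⟩, rfl⟩

/-- The iterated external product over a list. -/
def XP (L : List Fam) : Fam := L.foldr xprod {(∅ : Finset ℕ)}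

/-- The union of spans over a list. -/
def UL (L : List Fam) : Finset ℕ := L.foldr (fun κ t => sp κ ∪ t) ∅

lemma bigX_eq (σ : Fam) (κ : Finset ℕ → Fam) : bigX σ κ = XP (σ.toList.map κ) := rfl

lemma mem_UL {L : List Fam} {x : ℕ} : x ∈ UL L ↔ ∃ κ ∈ L, x ∈ sp κ := by
  induction L with
  | nil => simp [UL]
  | cons κ L ih =>
    simp only [UL, List.foldr_cons, Finset.mem_union, List.mem_cons]
    rw [show (List.foldr (fun κ t => sp κ ∪ t) ∅ L) = UL L from rfl, ih]
    constructor
    · rintro (h | ⟨κ', hκ', hx⟩)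
      · exact ⟨κ, Or.inl rfl, h⟩
      · exact ⟨κ', Or.inr hκ', hx⟩
    · rintro ⟨κ', (rfl | hκ'), hx⟩
      · exact Or.inl hx
      · exact Or.inr ⟨κ', hκ', hx⟩

lemma maxels_nonempty {S : Fam} (h : S.Nonempty) : (maxels S).Nonempty := by
  obtain ⟨A, hA⟩ := h
  obtain ⟨B, hB, _⟩ := exists_le_maxels hA
  exact ⟨B, hB⟩

lemma xprod_nonempty {α β : Fam} (hα : α.Nonempty) (hβ : β.Nonempty) :
    (xprod α β).Nonempty := by
  apply maxels_nonempty
  obtain ⟨a, ha⟩ := hα; obtain ⟨b, hb⟩ := hβ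
  exact ⟨_, Finset.mem_image.2 ⟨(a, b), Finset.mem_product.2 ⟨ha, hb⟩, rfl⟩⟩

lemma XP_nonempty {L : List Fam} (h : ∀ κ ∈ L, κ.Nonempty) : (XP L).Nonempty := by
  induction L with
  | nil => exact ⟨∅, by simp [XP]⟩
  | cons κ L ih =>
    exact xprod_nonempty (h κ (by simp)) (ih fun κ' hκ' => h κ' (by simp [hκ']))

lemma sp_xprod {α β : Fam} (hα : α.Nonempty) (hβ : β.Nonempty) :
    sp (xprod α β) = sp α ∪ sp β := by
  unfold xprod
  rw [sp_maxels]
  apply Finset.Subset.antisymm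
  · intro x hx
    obtain ⟨X, hX, hxX⟩ := mem_sp.1 hx
    simp only [Finset.mem_image, Finset.mem_product] at hX
    obtain ⟨⟨a, b⟩, ⟨ha, hb⟩, rfl⟩ := hX
    simp only [Finset.mem_union, Finset.mem_sdiff, Finset.mem_inter] at hxX
    rcases hxX with (⟨hxa, _⟩ | ⟨hxb, _⟩) | ⟨hxa, _⟩
    · exact Finset.mem_union_left _ (mem_sp.2 ⟨a, ha, hxa⟩)
    · exact Finset.mem_union_right _ (mem_sp.2 ⟨b, hb, hxb⟩)
    · exact Finset.mem_union_left _ (mem_sp.2 ⟨a, ha, hxa⟩)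
  · intro x hx
    rcases Finset.mem_union.1 hx with hx | hx
    · obtain ⟨a, ha, hxa⟩ := mem_sp.1 hx
      by_cases hxb : x ∈ sp β
      · obtain ⟨b, hb, hxb'⟩ := mem_sp.1 hxb
        refine mem_sp.2 ⟨_, Finset.mem_image.2 ⟨(a, b), Finset.mem_product.2 ⟨ha, hb⟩, rfl⟩, ?_⟩
        simp [hxa, hxb']
      · obtain ⟨b, hb⟩ := hβ
        refine mem_sp.2 ⟨_, Finset.mem_image.2 ⟨(a, b), Finset.mem_product.2 ⟨ha, hb⟩, rfl⟩, ?_⟩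
        simp [hxa, hxb]
    · obtain ⟨b, hb, hxb⟩ := mem_sp.1 hx
      by_cases hxa : x ∈ sp α
      · obtain ⟨a, ha, hxa'⟩ := mem_sp.1 hxa
        refine mem_sp.2 ⟨_, Finset.mem_image.2 ⟨(a, b), Finset.mem_product.2 ⟨ha, hb⟩, rfl⟩, ?_⟩
        simp [hxa', hxb]
      · obtain ⟨a, ha⟩ := hα
        refine mem_sp.2 ⟨_, Finset.mem_image.2 ⟨(a, b), Finset.mem_product.2 ⟨ha, hb⟩, rfl⟩, ?_⟩
        simp [hxa, hxb]

lemma sp_XP {L : List Fam} (h : ∀ κ ∈ L, κ.Nonempty) : sp (XP L) = UL L := by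
  induction L with
  | nil => simp [XP, UL, sp]
  | cons κ L ih =>
    have hL : ∀ κ' ∈ L, κ'.Nonempty := fun κ' hκ' => h κ' (by simp [hκ'])
    show sp (xprod κ (XP L)) = sp κ ∪ UL L
    rw [sp_xprod (h κ (by simp)) (XP_nonempty hL), ih hL]

lemma XP_cover {L : List Fam} {A : Finset ℕ} (hA : A ⊆ UL L)
    (hc : ∀ κ ∈ L, ∃ C ∈ κ, A ∩ sp κ ⊆ C) : ∃ X ∈ XP L, A ⊆ X := by
  induction L generalizing A with
  | nil =>
    refine ⟨∅, by simp [XP], ?_⟩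
    intro x hx
    exact absurd (hA hx) (by simp [UL])
  | cons κ L ih =>
    have hLne : ∀ κ' ∈ L, κ'.Nonempty := by
      intro κ' hκ'
      obtain ⟨C, hC, _⟩ := hc κ' (by simp [hκ'])
      exact ⟨C, hC⟩
    obtain ⟨C, hC, hAC⟩ := hc κ (by simp)
    obtain ⟨Y, hY, hAY⟩ := ih (A := A ∩ UL L) (Finset.inter_subset_right)
      (fun κ' hκ' => by
        obtain ⟨C', hC', hsub⟩ := hc κ' (by simp [hκ'])
        exact ⟨C', hC', (Finset.inter_subset_inter Finset.inter_subset_left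
          (Finset.Subset.refl _)).trans hsub⟩)
    have hspXP : sp (XP L) = UL L := sp_XP hLne
    obtain ⟨X, hX, hsub⟩ := src_le_xprod (β := XP L) hC hY
    refine ⟨X, hX, fun x hx => ?_⟩
    apply hsub
    have hxU : x ∈ sp κ ∪ UL L := by
      have := hA hx
      rw [mem_UL] at this
      obtain ⟨κ', hκ', hxκ'⟩ := this
      rcases List.mem_cons.1 hκ' with rfl | hκ'
      · exact Finset.mem_union_left _ hxκ'
      · exact Finset.mem_union_right _ (mem_UL.2 ⟨κ', hκ', hxκ'⟩)
    simp only [Finset.mem_union, Finset.mem_sdiff, Finset.mem_inter, hspXP]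
    rcases Finset.mem_union.1 hxU with hxκ | hxL
    · by_cases hxL' : x ∈ UL L
      · exact Or.inr ⟨hAC (Finset.mem_inter.2 ⟨hx, hxκ⟩), hAY (Finset.mem_inter.2 ⟨hx, hxL'⟩)⟩
      · exact Or.inl (Or.inl ⟨hAC (Finset.mem_inter.2 ⟨hx, hxκ⟩), hxL'⟩)
    · by_cases hxκ : x ∈ sp κ
      · exact Or.inr ⟨hAC (Finset.mem_inter.2 ⟨hx, hxκ⟩), hAY (Finset.mem_inter.2 ⟨hx, hxL⟩)⟩
      · exact Or.inl (Or.inr ⟨hAY (Finset.mem_inter.2 ⟨hx, hxL⟩), hxκ⟩)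

lemma XP_proj {L : List Fam} (hne : ∀ κ ∈ L, κ.Nonempty) {X : Finset ℕ}
    (hX : X ∈ XP L) : X ⊆ UL L ∧ ∀ κ ∈ L, ∃ C ∈ κ, X ∩ sp κ ⊆ C := by
  induction L generalizing X with
  | nil =>
    have : X = ∅ := by simpa [XP] using hX
    subst this
    exact ⟨by simp, by simp⟩
  | cons κ L ih =>
    have hLne : ∀ κ' ∈ L, κ'.Nonempty := fun κ' hκ' => hne κ' (by simp [hκ'])
    obtain ⟨a, ha, Y, hY, rfl⟩ := mem_xprod_src (α := κ) (β := XP L) hX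
    have hspXP : sp (XP L) = UL L := sp_XP hLne
    obtain ⟨hYU, hYc⟩ := ih hLne hY
    constructor
    · intro x hx
      have hUL : UL (κ :: L) = sp κ ∪ UL L := rfl
      simp only [Finset.mem_union, Finset.mem_sdiff, Finset.mem_inter, hspXP] at hx
      rw [hUL, Finset.mem_union]
      rcases hx with (⟨hxa, _⟩ | ⟨hxY, _⟩) | ⟨hxa, _⟩
      · exact Or.inl (mem_sp.2 ⟨a, ha, hxa⟩)
      · exact Or.inr (hYU hxY)
      · exact Or.inl (mem_sp.2 ⟨a, ha, hxa⟩)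
    · intro κ' hκ'
      rcases List.mem_cons.1 hκ' with rfl | hκ'
      · refine ⟨a, ha, fun x hx => ?_⟩
        obtain ⟨hx1, hx2⟩ := Finset.mem_inter.1 hx
        simp only [Finset.mem_union, Finset.mem_sdiff, Finset.mem_inter, hspXP] at hx1
        rcases hx1 with (⟨hxa, _⟩ | ⟨_, hnκ⟩) | ⟨hxa, _⟩
        · exact hxa
        · exact absurd hx2 hnκ
        · exact hxa
      · obtain ⟨C, hC, hsub⟩ := hYc κ' hκ'
        refine ⟨C, hC, fun x hx => ?_⟩
        obtain ⟨hx1, hx2⟩ := Finset.mem_inter.1 hx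
        have hxκ'U : x ∈ UL L := mem_UL.2 ⟨κ', hκ', hx2⟩
        simp only [Finset.mem_union, Finset.mem_sdiff, Finset.mem_inter, hspXP] at hx1
        rcases hx1 with (⟨_, hnL⟩ | ⟨hxY, _⟩) | ⟨_, hxY⟩
        · exact absurd hxκ'U hnL
        · exact hsub (Finset.mem_inter.2 ⟨hxY, hx2⟩)
        · exact hsub (Finset.mem_inter.2 ⟨hxY, hx2⟩)

lemma mem_proj_src {M : Finset ℕ} {γ : Fam} {X : Finset ℕ} (h : X ∈ proj M γ) :
    ∃ A ∈ γ, X = A ∩ M := by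
  have := maxels_subset h
  simp only [Finset.mem_image] at this
  obtain ⟨A, hA, hX⟩ := this
  exact ⟨A, hA, hX.symm⟩

lemma inter_le_proj {M : Finset ℕ} {γ : Fam} {A : Finset ℕ} (hA : A ∈ γ) :
    ∃ C ∈ proj M γ, A ∩ M ⊆ C :=
  exists_le_maxels (Finset.mem_image.2 ⟨A, hA, rfl⟩)

lemma proj_isAC (M : Finset ℕ) (γ : Fam) : IsAC M (proj M γ) := by
  constructor
  · intro X hX
    obtain ⟨A, _, rfl⟩ := mem_proj_src hX
    exact Finset.inter_subset_right
  · intro A hA B hB hAB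
    exact (mem_maxels.1 hA).2 B (maxels_subset hB) hAB

lemma sp_proj {M : Finset ℕ} {γ : Fam} : sp (proj M γ) = sp γ ∩ M := by
  unfold proj
  rw [sp_maxels]
  apply Finset.Subset.antisymm
  · intro x hx
    obtain ⟨X, hX, hxX⟩ := mem_sp.1 hx
    obtain ⟨A, hA, rfl⟩ := Finset.mem_image.1 hX
    obtain ⟨hx1, hx2⟩ := Finset.mem_inter.1 hxX
    exact Finset.mem_inter.2 ⟨mem_sp.2 ⟨A, hA, hx1⟩, hx2⟩
  · intro x hx
    obtain ⟨hx1, hx2⟩ := Finset.mem_inter.1 hx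
    obtain ⟨A, hA, hxA⟩ := mem_sp.1 hx1
    exact mem_sp.2 ⟨A ∩ M, Finset.mem_image.2 ⟨A, hA, rfl⟩, Finset.mem_inter.2 ⟨hxA, hx2⟩⟩

lemma mem_bigJoin_src {σ : Fam} {κ : Finset ℕ → Fam} {X : Finset ℕ}
    (h : X ∈ bigJoin σ κ) : ∃ S ∈ σ, X ∈ κ S := by
  have := maxels_subset h
  rwa [Finset.mem_sup] at this

lemma le_bigJoin {σ : Fam} {κ : Finset ℕ → Fam} {S : Finset ℕ} {C : Finset ℕ}
    (hS : S ∈ σ) (hC : C ∈ κ S) : ∃ D ∈ bigJoin σ κ, C ⊆ D :=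
  exists_le_maxels (Finset.mem_sup.2 ⟨S, hS, hC⟩)

lemma sp_bigJoin {σ : Fam} {κ : Finset ℕ → Fam} (h : ∀ S ∈ σ, sp (κ S) = S) :
    sp (bigJoin σ κ) = sp σ := by
  unfold bigJoin
  rw [sp_maxels]
  apply Finset.Subset.antisymm
  · intro x hx
    obtain ⟨A, hA, hxA⟩ := mem_sp.1 hx
    obtain ⟨S, hS, hAS⟩ := Finset.mem_sup.1 hA
    have : x ∈ sp (κ S) := mem_sp.2 ⟨A, hAS, hxA⟩
    rw [h S hS] at this
    exact mem_sp.2 ⟨S, hS, this⟩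
  · intro x hx
    obtain ⟨S, hS, hxS⟩ := mem_sp.1 hx
    have : x ∈ sp (κ S) := by rw [h S hS]; exact hxS
    obtain ⟨A, hA, hxA⟩ := mem_sp.1 this
    exact mem_sp.2 ⟨A, Finset.mem_sup.2 ⟨S, hS, hA⟩, hxA⟩

lemma mem_mapped_list {σ : Fam} {κ : Finset ℕ → Fam} {κ' : Fam} :
    κ' ∈ σ.toList.map κ ↔ ∃ S ∈ σ, κ' = κ S := by
  simp only [List.mem_map, Finset.mem_toList]
  exact ⟨fun ⟨S, hS, h⟩ => ⟨S, hS, h.symm⟩, fun ⟨S, hS, h⟩ => ⟨S, hS, h.symm⟩⟩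

lemma UL_mapped {σ : Fam} {κ : Finset ℕ → Fam} (h : ∀ S ∈ σ, sp (κ S) = S) :
    UL (σ.toList.map κ) = sp σ := by
  ext x
  rw [mem_UL, mem_sp]
  constructor
  · rintro ⟨κ', hκ', hx⟩
    obtain ⟨S, hS, rfl⟩ := mem_mapped_list.1 hκ'
    exact ⟨S, hS, (h S hS) ▸ hx⟩
  · rintro ⟨S, hS, hx⟩
    exact ⟨κ S, mem_mapped_list.2 ⟨S, hS, rfl⟩, (h S hS).symm ▸ hx⟩

/-- general coordinate system theorem. -/
theorem general_coordinate_system (N : Finset ℕ) (σ : Fam)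
    (hσ : IsAC N σ) (hsp : sp σ = N) :
    (∀ κ₁ κ₂ : Finset ℕ → Fam,
      (∀ S ∈ σ, IsAC S (κ₁ S) ∧ sp (κ₁ S) = S) →
      (∀ S ∈ σ, IsAC S (κ₂ S) ∧ sp (κ₂ S) = S) →
      (∃ γ : Fam, γ ∈ intervalSet N (bigJoin σ κ₁) (bigX σ κ₁) ∧
        γ ∈ intervalSet N (bigJoin σ κ₂) (bigX σ κ₂)) →
      ∀ S ∈ σ, κ₁ S = κ₂ S) ∧
    (∀ γ : Fam, (IsAC N γ ∧ sp γ = N) ↔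
      ∃ κf : Finset ℕ → Fam, (∀ S ∈ σ, IsAC S (κf S) ∧ sp (κf S) = S) ∧
        γ ∈ intervalSet N (bigJoin σ κf) (bigX σ κf)) := by
  classical
  have key : ∀ κf : Finset ℕ → Fam, (∀ S ∈ σ, IsAC S (κf S) ∧ sp (κf S) = S) →
      ∀ γ : Fam, γ ∈ intervalSet N (bigJoin σ κf) (bigX σ κf) →
      ∀ S ∈ σ, κf S = proj S γ := by
    intro κf hκ γ hγ S hS
    obtain ⟨hγAC, hlo, hhi⟩ := hγ
    have h1 : amle (κf S) (proj S γ) := by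
      intro C hC
      obtain ⟨D, hD, hCD⟩ := le_bigJoin hS hC
      obtain ⟨A, hA, hDA⟩ := hlo D hD
      have hCS : C ⊆ S := by
        rw [← (hκ S hS).2]
        intro x hx; exact mem_sp.2 ⟨C, hC, hx⟩
      obtain ⟨E, hE, hAE⟩ := inter_le_proj (M := S) hA
      exact ⟨E, hE, fun x hx =>
        hAE (Finset.mem_inter.2 ⟨hDA (hCD hx), hCS hx⟩)⟩
    by_cases hne : ∀ T ∈ σ, (κf T).Nonempty
    · -- all coordinate antichains nonempty
      have hLne : ∀ κ' ∈ σ.toList.map κf, κ'.Nonempty := by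
        intro κ' hκ'
        obtain ⟨T, hT, rfl⟩ := mem_mapped_list.1 hκ'
        exact hne T hT
      have h2 : amle (proj S γ) (κf S) := by
        intro X hX
        obtain ⟨A, hA, rfl⟩ := mem_proj_src hX
        obtain ⟨Y, hY, hAY⟩ := hhi A hA
        rw [bigX_eq] at hY
        obtain ⟨_, hproj⟩ := XP_proj hLne hY
        obtain ⟨C, hC, hsub⟩ := hproj (κf S) (mem_mapped_list.2 ⟨S, hS, rfl⟩)
        refine ⟨C, hC, fun x hx => ?_⟩
        obtain ⟨hx1, hx2⟩ := Finset.mem_inter.1 hx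
        apply hsub
        rw [(hκ S hS).2]
        exact Finset.mem_inter.2 ⟨hAY hx1, hx2⟩
      exact amle_antisymm (hκ S hS).1.2 (proj_isAC S γ).2 h1 h2
    · -- degenerate case: some coordinate is empty, forces σ = {∅}
      push_neg at hne
      obtain ⟨T, hT, hTe⟩ := hne
      have hTemp : κf T = ∅ := hTe
      have hT0 : T = ∅ := by
        rw [← (hκ T hT).2, hTemp]; rfl
      subst hT0
      have hσeq : σ = {∅} := by
        apply Finset.Subset.antisymm
        · intro B hB
          have := hσ.2 ∅ hT B hB (Finset.empty_subset B)
          simp [← this]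
        · intro B hB
          rw [Finset.mem_singleton] at hB
          exact hB ▸ hT
      have hS0 : S = ∅ := by
        rw [hσeq, Finset.mem_singleton] at hS; exact hS
      subst hS0
      have hbigX : bigX σ κf = ∅ := by
        rw [bigX_eq, hσeq, Finset.toList_singleton]
        show xprod (κf ∅) (XP []) = ∅
        rw [hTemp]
        simp [xprod, maxels, XP]
      rw [hbigX] at hhi
      have hγe : γ = ∅ := by
        rw [Finset.eq_empty_iff_forall_notMem]
        intro A hA
        obtain ⟨B, hB, -⟩ := hhi A hA
        exact absurd hB (Finset.notMem_empty B)
      rw [hγe, hTemp]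
      simp [proj, maxels]
  constructor
  · rintro κ₁ κ₂ h1 h2 ⟨γ, hg1, hg2⟩ S hS
    rw [key κ₁ h1 γ hg1 S hS, key κ₂ h2 γ hg2 S hS]
  · intro γ
    constructor
    · rintro ⟨hAC, hspγ⟩
      refine ⟨fun S => proj S γ, fun S hS => ⟨proj_isAC S γ, ?_⟩, hAC, ?_, ?_⟩
      · rw [sp_proj, hspγ]
        exact Finset.inter_eq_right.2 (hσ.1 S hS)
      · -- bigJoin ≤ γ
        intro D hD
        obtain ⟨S, hS, hDS⟩ := mem_bigJoin_src hD
        obtain ⟨A, hA, rfl⟩ := mem_proj_src hDS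
        exact ⟨A, hA, Finset.inter_subset_left⟩
      · -- γ ≤ bigX
        intro A hA
        have hsppr : ∀ S ∈ σ, sp (proj S γ) = S := by
          intro S hS
          rw [sp_proj, hspγ]
          exact Finset.inter_eq_right.2 (hσ.1 S hS)
        have hUL : UL (σ.toList.map fun S => proj S γ) = N := by
          rw [UL_mapped hsppr, hsp]
        have hAN : A ⊆ N := hAC.1 A hA
        obtain ⟨X, hX, hAX⟩ := XP_cover (L := σ.toList.map fun S => proj S γ)
          (A := A) (hUL ▸ hAN)
          (fun κ' hκ' => by
            obtain ⟨S, hS, rfl⟩ := mem_mapped_list.1 hκ'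
            obtain ⟨C, hC, hsub⟩ := inter_le_proj (M := S) hA
            refine ⟨C, hC, fun x hx => ?_⟩
            obtain ⟨hx1, hx2⟩ := Finset.mem_inter.1 hx
            rw [hsppr S hS] at hx2
            exact hsub (Finset.mem_inter.2 ⟨hx1, hx2⟩))
        exact ⟨X, by rw [bigX_eq]; exact hX, hAX⟩
    · rintro ⟨κf, hκ, hmem⟩
      refine ⟨hmem.1, ?_⟩
      apply Finset.Subset.antisymm
      · intro x hx
        obtain ⟨A, hA, hxA⟩ := mem_sp.1 hx
        exact hmem.1.1 A hA hxA
      · have h1 : sp (bigJoin σ κf) = N := by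
          rw [sp_bigJoin (fun S hS => (hκ S hS).2), hsp]
        rw [← h1]
        exact sp_subset_of_amle hmem.2.1
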